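/- arXiv:2207.13477 — 2 statements merged into one kernel-verified Lean document; each statement's English description precedes it below -/
import Mathlib

section
/- Define S_n^0 = 2/(2n+1) and recursively S_n^{r} = (1/(2n+1)) * (S_{n-1}^{r-1} + S_{n+1}^{r-1}) for r ≥ 1. Then for all integers r ≥ 0 and n ≥ r+1, S_n^r = 2^{r+1} / ∏_{j=1}^{r+1} (2n - 2r + 4j - 3). -/
/-- `S r n` is the sequence with `S 0 n = 2/(2n+1)` and
`S r n = (S (r-1) (n-1) + S (r-1) (n+1)) / (2n+1)`. -/
def S : ℕ → ℤ → ℚ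
  | 0, n => 2 / (2 * n + 1)
  | (r + 1), n => (S r (n - 1) + S r (n + 1)) / (2 * n + 1)

lemma S_prod_ne_zero (r : ℕ) (n : ℤ) (hn : (r : ℤ) + 1 ≤ n) :
    ∏ j ∈ Finset.Icc 1 (r + 1), ((2 * n - 2 * r + 4 * j - 3 : ℚ)) ≠ 0 := by
  apply Finset.prod_ne_zero_iff.mpr
  intro j hj
  simp only [Finset.mem_Icc] at hj
  have hj1 : (1 : ℤ) ≤ (j : ℤ) := by exact_mod_cast hj.1
  have h : (2 * (n:ℚ) - 2 * r + 4 * j - 3) = ((2 * n - 2 * r + 4 * (j:ℤ) - 3 : ℤ) : ℚ) := by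
    push_cast; ring
  rw [h]
  exact_mod_cast (by omega : (2 * n - 2 * (r:ℤ) + 4 * (j:ℤ) - 3) ≠ 0)

theorem S_closed_form (r : ℕ) (n : ℤ) (hn : (r : ℤ) + 1 ≤ n) :
    S r n = 2 ^ (r + 1) / ∏ j ∈ Finset.Icc 1 (r + 1), ((2 * n - 2 * r + 4 * j - 3 : ℚ)) := by
  induction r generalizing n with
  | zero =>
    simp [S]
    ring_nf
  | succ r ih =>
    have hn' : ((r:ℤ) + 1) + 1 ≤ n := by push_cast at hn ⊢; omega
    have h1 : (r : ℤ) + 1 ≤ n - 1 := by omega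
    have h2 : (r : ℤ) + 1 ≤ n + 1 := by omega
    rw [S, ih _ h1, ih _ h2]
    set P := ∏ j ∈ Finset.Icc 1 (r + 1), ((2 * ((n-1:ℤ):ℚ) - 2 * r + 4 * j - 3 : ℚ)) with hP
    set Q := ∏ j ∈ Finset.Icc 1 (r + 1), ((2 * ((n+1:ℤ):ℚ) - 2 * r + 4 * j - 3 : ℚ)) with hQ
    have hPne : P ≠ 0 := S_prod_ne_zero r (n-1) h1
    have hQne : Q ≠ 0 := S_prod_ne_zero r (n+1) h2
    have hA1 : ∏ j ∈ Finset.Icc 1 (r + 1 + 1), ((2 * n - 2 * (r+1:ℕ) + 4 * j - 3 : ℚ))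
        = P * (2 * (n:ℚ) + 2 * r + 3) := by
      rw [Finset.prod_Icc_succ_top (by omega)]
      congr 1
      · apply Finset.prod_congr rfl
        intro j hj
        push_cast
        ring
      · push_cast; ring
    have hA2 : ∏ j ∈ Finset.Icc 1 (r + 1 + 1), ((2 * n - 2 * (r+1:ℕ) + 4 * j - 3 : ℚ))
        = (2 * (n:ℚ) - 2 * r - 1) * Q := by
      rw [← Finset.Ico_add_one_right_eq_Icc, Finset.prod_Ico_eq_prod_range]
      rw [hQ, ← Finset.Ico_add_one_right_eq_Icc, Finset.prod_Ico_eq_prod_range]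
      have e : r + 1 + 1 + 1 - 1 = r + 1 + 1 := rfl
      rw [e, Finset.prod_range_succ', mul_comm]
      have e2 : r + 1 + 1 - 1 = r + 1 := rfl
      rw [e2]
      congr 1
      · push_cast; ring
      · apply Finset.prod_congr rfl
        intro i hi
        push_cast; ring
    have hrel : P * (2 * (n:ℚ) + 2 * r + 3) = (2 * (n:ℚ) - 2 * r - 1) * Q := by
      rw [← hA1, ← hA2]
    rw [hA1]
    have hn1 : (2 * (n:ℚ) + 1) ≠ 0 := by
      have : (2 * (n:ℚ) + 1) = ((2*n+1 : ℤ) : ℚ) := by push_cast; ring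
      rw [this]; exact_mod_cast (by omega : (2*n+1 : ℤ) ≠ 0)
    have hn2 : (2 * (n:ℚ) + 2 * r + 3) ≠ 0 := by
      have : (2 * (n:ℚ) + 2 * r + 3) = ((2*n+2*r+3 : ℤ) : ℚ) := by push_cast; ring
      rw [this]; exact_mod_cast (by omega : (2*n+2*(r:ℤ)+3 : ℤ) ≠ 0)
    field_simp
    rw [eq_div_iff (by convert hn2 using 1; ring)]
    linear_combination (2:ℚ)^(r+1) * hrel
end

section
/- For every integer n ≥ 1 and λ ≥ 1 real, and all x in [-1, 1], (1 - x^2)^{λ - 1/2} * |C_n^{(λ)}(x)| ≤ Γ(n/2 + λ) / (Γ(λ) * Γ(n/2 + 1)), where C_n^{(λ)} is the Gegenbauer (ultraspherical) polynomial of degree n with parameter λ. -/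
/-- The Gegenbauer (ultraspherical) polynomial `Cₙ^{(λ)}`, defined via the standard
three-term recurrence coming from the generating function
`(1 - 2xt + t²)^{-λ} = Σ Cₙ^{(λ)}(x) tⁿ`. -/
noncomputable def gegenbauer (lam : ℝ) : ℕ → ℝ → ℝ
  | 0 => fun _ => 1
  | 1 => fun x => 2 * lam * x
  | (n + 2) => fun x =>
      (2 * x * ((n : ℝ) + 1 + lam) * gegenbauer lam (n + 1) x
        - ((n : ℝ) + 2 * lam) * gegenbauer lam n x) / ((n : ℝ) + 2)

noncomputable def gegD (lam : ℝ) : ℕ → ℝ → ℝ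
  | 0 => fun _ => 0
  | 1 => fun _ => 2 * lam
  | (n + 2) => fun x =>
      (2 * ((n : ℝ) + 1 + lam) * gegenbauer lam (n + 1) x
        + 2 * x * ((n : ℝ) + 1 + lam) * gegD lam (n + 1) x
        - ((n : ℝ) + 2 * lam) * gegD lam n x) / ((n : ℝ) + 2)

lemma gegenbauer_hasDerivAt (l : ℝ) : ∀ n x, HasDerivAt (gegenbauer l n) (gegD l n x) x := by
  have key : ∀ n, (∀ x, HasDerivAt (gegenbauer l n) (gegD l n x) x) ∧
      (∀ x, HasDerivAt (gegenbauer l (n+1)) (gegD l (n+1) x) x) := by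
    intro n
    induction n with
    | zero =>
      constructor
      · intro x
        simpa [gegenbauer, gegD] using (hasDerivAt_const x (1:ℝ))
      · intro x
        have h : HasDerivAt (fun x : ℝ => 2 * l * x) (2 * l * 1) x :=
          (hasDerivAt_id x).const_mul (2*l)
        have h2 : HasDerivAt (gegenbauer l 1) (2 * l * 1) x := h
        simpa [gegD] using h2
    | succ n ih =>
      refine ⟨ih.2, ?_⟩
      intro x
      have h1 := ih.1 x
      have h2 := ih.2 x
      have hcore := (((hasDerivAt_id x).mul h2).const_mul (2*((n:ℝ)+1+l))).sub
        (h1.const_mul ((n:ℝ)+2*l))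
      have hdiv := hcore.div_const ((n:ℝ)+2)
      have hfun : gegenbauer l (n+2) = fun y =>
          (2*((n:ℝ)+1+l) * (y * gegenbauer l (n+1) y)
            - ((n:ℝ)+2*l) * gegenbauer l n y) / ((n:ℝ)+2) := by
        funext y
        show (2*y*((n:ℝ)+1+l)*gegenbauer l (n+1) y
          - ((n:ℝ)+2*l) * gegenbauer l n y)/((n:ℝ)+2) = _
        ring
      rw [show gegD l (n+2) x = (2*((n:ℝ)+1+l) * (1 * gegenbauer l (n+1) x
            + x * gegD l (n+1) x) - ((n:ℝ)+2*l) * gegD l n x) / ((n:ℝ)+2) by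
          show (2 * ((n : ℝ) + 1 + l) * gegenbauer l (n + 1) x
            + 2 * x * ((n : ℝ) + 1 + l) * gegD l (n + 1) x
            - ((n : ℝ) + 2 * l) * gegD l n x) / ((n : ℝ) + 2) = _
          ring, hfun]
      exact hdiv
  exact fun n => (key n).1
lemma gegD_step (l : ℝ) (n : ℕ) (x : ℝ) : gegD l (n+1+1) x =
    (2 * ((n : ℝ) + 1 + l) * gegenbauer l (n + 1) x
      + 2 * x * ((n : ℝ) + 1 + l) * gegD l (n + 1) x
      - ((n : ℝ) + 2 * l) * gegD l n x) / ((n : ℝ) + 2) := rfl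

lemma geg_step (l : ℝ) (n : ℕ) (x : ℝ) : gegenbauer l (n+1+1) x =
    (2 * x * ((n : ℝ) + 1 + l) * gegenbauer l (n + 1) x
      - ((n : ℝ) + 2 * l) * gegenbauer l n x) / ((n : ℝ) + 2) := rfl

lemma gegI_II (l : ℝ) : ∀ n : ℕ, (∀ x : ℝ,
      gegD l (n+1) x = x * gegD l n x + ((n:ℝ) + 2*l) * gegenbauer l n x) ∧
    (∀ x : ℝ, x * gegD l (n+1) x = gegD l n x + ((n:ℝ)+1) * gegenbauer l (n+1) x) := by
  intro n
  induction n with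
  | zero =>
    constructor
    · intro x; simp [gegD, gegenbauer]
    · intro x; simp [gegD, gegenbauer]; ring
  | succ n ih =>
    have hn2 : ((n:ℝ)+2) ≠ 0 := by positivity
    constructor
    · intro x
      have hII := ih.2 x
      push_cast
      rw [gegD_step, div_eq_iff hn2]
      linear_combination ((n:ℝ) + 2*l) * hII
    · intro x
      have hI := ih.1 x
      have hII := ih.2 x
      push_cast
      rw [gegD_step, geg_step]
      field_simp
      linear_combination 2*((n:ℝ)+1+l)*x * hII - ((n:ℝ)+2) * hI

lemma gegIV (l : ℝ) (n : ℕ) (x : ℝ) :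
    (x^2 - 1) * gegD l n x
      = ((n:ℝ)+1) * gegenbauer l (n+1) x - ((n:ℝ)+2*l) * (x * gegenbauer l n x) := by
  have hI := (gegI_II l n).1 x
  have hII := (gegI_II l n).2 x
  linear_combination hII - x*hI

noncomputable def gegDD (l : ℝ) (n : ℕ) (x : ℝ) : ℝ :=
  ((2*l+1)*x*gegD l n x - (n:ℝ)*((n:ℝ)+2*l)*gegenbauer l n x)/(1-x^2)

lemma gegD_hasDerivAt (l : ℝ) (n : ℕ) (x : ℝ) (hx : x^2 ≠ 1) :
    HasDerivAt (gegD l n) (gegDD l n x) x := by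
  have hs : x^2 - 1 ≠ 0 := sub_ne_zero.mpr hx
  set q : ℝ → ℝ := fun y => ((n:ℝ)+1) * gegenbauer l (n+1) y
    - ((n:ℝ)+2*l) * (y * gegenbauer l n y) with hqdef
  have hq : ∀ y, HasDerivAt q
      (((n:ℝ)+1) * gegD l (n+1) y
        - ((n:ℝ)+2*l) * (1 * gegenbauer l n y + y * gegD l n y)) y := by
    intro y
    exact ((gegenbauer_hasDerivAt l (n+1) y).const_mul _).sub
      (((hasDerivAt_id y).mul (gegenbauer_hasDerivAt l n y)).const_mul _)
  have hden : ∀ y : ℝ, HasDerivAt (fun y : ℝ => y^2 - 1) (2*y) y := by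
    intro y
    simpa using ((hasDerivAt_pow 2 y).sub_const 1)
  have hquot : HasDerivAt (fun y => q y / (y^2 - 1))
      (((((n:ℝ)+1) * gegD l (n+1) x
        - ((n:ℝ)+2*l) * (1 * gegenbauer l n x + x * gegD l n x)) * (x^2-1)
        - q x * (2*x)) / (x^2-1)^2) x := (hq x).div (hden x) hs
  have hopen : IsOpen {y : ℝ | y^2 ≠ 1} := by
    have : Continuous (fun y : ℝ => y^2) := by continuity
    exact isOpen_compl_iff.mpr (isClosed_singleton.preimage this)
  have heq : gegD l n =ᶠ[nhds x] (fun y => q y / (y^2 - 1)) := by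
    filter_upwards [hopen.mem_nhds hx] with y hy
    have hsy : y^2 - 1 ≠ 0 := sub_ne_zero.mpr hy
    rw [eq_div_iff hsy, mul_comm]
    exact (gegIV l n y).symm ▸ rfl
  have := hquot.congr_of_eventuallyEq heq
  refine this.congr_deriv (Eq.symm ?_)
  have hI := (gegI_II l n).1 x
  have hIV := gegIV l n x
  have h1s : (1:ℝ) - x^2 ≠ 0 := fun h => hs (by linarith)
  unfold gegDD
  rw [div_eq_div_iff h1s (pow_ne_zero 2 hs)]
  linear_combination ((n:ℝ)+1)*(x^2-1)^2*hI + 2*x*(x^2-1)*hIV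

lemma gegDD_mul (l : ℝ) (n : ℕ) (x : ℝ) (hx : x^2 ≠ 1) :
    (1-x^2) * gegDD l n x
      = (2*l+1)*x*gegD l n x - (n:ℝ)*((n:ℝ)+2*l)*gegenbauer l n x := by
  have h1s : (1:ℝ) - x^2 ≠ 0 := fun h => hx (by linarith)
  rw [gegDD, mul_div_cancel₀ _ h1s]

noncomputable def gw (l : ℝ) (n : ℕ) (x : ℝ) : ℝ :=
  (1-x^2)^(l-1/2) * gegenbauer l n x

noncomputable def gw1 (l : ℝ) (n : ℕ) (x : ℝ) : ℝ :=
  (1-x^2)^(l-1/2) * gegD l n x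
    - (2*l-1)*(x*((1-x^2)^(l-1/2-1) * gegenbauer l n x))

lemma deriv_one_sub_sq (x : ℝ) : HasDerivAt (fun y : ℝ => 1 - y^2) (-(2*x)) x := by
  simpa using (hasDerivAt_pow 2 x).const_sub 1

lemma gw_hasDerivAt (l : ℝ) (n : ℕ) (x : ℝ) (h1 : 0 < 1 - x^2) :
    HasDerivAt (gw l n) (gw1 l n x) x := by
  have hA : HasDerivAt (fun y : ℝ => (1-y^2)^(l-1/2))
      (-(2*x) * (l-1/2) * (1-x^2)^(l-1/2-1)) x :=
    (deriv_one_sub_sq x).rpow_const (Or.inl h1.ne')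
  have := hA.mul (gegenbauer_hasDerivAt l n x)
  show HasDerivAt (fun y => (1-y^2)^(l-1/2) * gegenbauer l n y) (gw1 l n x) x
  refine this.congr_deriv (Eq.symm ?_)
  unfold gw1; ring

lemma gw1_hasDerivAt (l : ℝ) (n : ℕ) (x : ℝ) (h1 : 0 < 1 - x^2) :
    HasDerivAt (gw1 l n)
      ((-(2*x) * (l-1/2) * (1-x^2)^(l-1/2-1)) * gegD l n x
        + (1-x^2)^(l-1/2) * gegDD l n x
        - (2*l-1)*(1*((1-x^2)^(l-1/2-1) * gegenbauer l n x)
            + x*((-(2*x) * (l-1/2-1) * (1-x^2)^(l-1/2-1-1)) * gegenbauer l n x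
              + (1-x^2)^(l-1/2-1) * gegD l n x))) x := by
  have hx2 : x^2 ≠ 1 := by intro h; rw [h] at h1; simp at h1
  have hA : HasDerivAt (fun y : ℝ => (1-y^2)^(l-1/2))
      (-(2*x) * (l-1/2) * (1-x^2)^(l-1/2-1)) x :=
    (deriv_one_sub_sq x).rpow_const (Or.inl h1.ne')
  have hB : HasDerivAt (fun y : ℝ => (1-y^2)^(l-1/2-1))
      (-(2*x) * (l-1/2-1) * (1-x^2)^(l-1/2-1-1)) x :=
    (deriv_one_sub_sq x).rpow_const (Or.inl h1.ne')
  exact (hA.mul (gegD_hasDerivAt l n x hx2)).sub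
    (((hasDerivAt_id x).mul (hB.mul (gegenbauer_hasDerivAt l n x))).const_mul (2*l-1))

/-- the self-adjoint-form ODE for the weighted function -/
lemma gw_ode (l : ℝ) (n : ℕ) (x : ℝ) (h1 : 0 < 1 - x^2) :
    (1-x^2) * ((-(2*x) * (l-1/2) * (1-x^2)^(l-1/2-1)) * gegD l n x
        + (1-x^2)^(l-1/2) * gegDD l n x
        - (2*l-1)*(1*((1-x^2)^(l-1/2-1) * gegenbauer l n x)
            + x*((-(2*x) * (l-1/2-1) * (1-x^2)^(l-1/2-1-1)) * gegenbauer l n x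
              + (1-x^2)^(l-1/2-1) * gegD l n x)))
      = -((2*l-3)*x*gw1 l n x) - (((n:ℝ)+1)*((n:ℝ)+2*l-1)) * gw l n x := by
  have hx2 : x^2 ≠ 1 := by intro h; rw [h] at h1; simp at h1
  have hODE := gegDD_mul l n x hx2
  have hA2 : (1-x^2)^(l-1/2) = (1-x^2)^(l-1/2-1) * (1-x^2) := by
    rw [← Real.rpow_add_one h1.ne' (l-1/2-1)]; congr 1; ring
  have hB2 : (1-x^2)^(l-1/2-1) = (1-x^2)^(l-1/2-1-1) * (1-x^2) := by
    rw [← Real.rpow_add_one h1.ne' (l-1/2-1-1)]; congr 1; ring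
  rw [gw1, gw, hA2, hB2]
  linear_combination ((1-x^2)^(l-1/2-1-1) * (1-x^2) * (1-x^2)) * hODE

noncomputable def gE (l : ℝ) (n : ℕ) (x : ℝ) : ℝ :=
  gw l n x ^ 2 + (1-x^2) * gw1 l n x ^ 2 / (((n:ℝ)+1)*((n:ℝ)+2*l-1))

lemma gE_hasDerivAt (l : ℝ) (n : ℕ) (x : ℝ) (hl : 1 ≤ l) (h1 : 0 < 1 - x^2) :
    HasDerivAt (gE l n)
      (-(4*(l-1)*x*gw1 l n x ^ 2 / (((n:ℝ)+1)*((n:ℝ)+2*l-1)))) x := by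
  set W2 := ((-(2*x) * (l-1/2) * (1-x^2)^(l-1/2-1)) * gegD l n x
        + (1-x^2)^(l-1/2) * gegDD l n x
        - (2*l-1)*(1*((1-x^2)^(l-1/2-1) * gegenbauer l n x)
            + x*((-(2*x) * (l-1/2-1) * (1-x^2)^(l-1/2-1-1)) * gegenbauer l n x
              + (1-x^2)^(l-1/2-1) * gegD l n x))) with hW2
  have hw := gw_hasDerivAt l n x h1
  have hw1 : HasDerivAt (gw1 l n) W2 x := gw1_hasDerivAt l n x h1
  have hE : HasDerivAt (gE l n)
      (2 * gw l n x ^ 1 * gw1 l n x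
        + (-(2*x) * gw1 l n x ^ 2 + (1-x^2) * (2 * gw1 l n x ^ 1 * W2))
          / (((n:ℝ)+1)*((n:ℝ)+2*l-1))) x := by
    exact (hw.pow 2).add (((deriv_one_sub_sq x).mul (hw1.pow 2)).div_const _)
  convert hE using 1
  have hode := gw_ode l n x h1
  rw [← hW2] at hode
  have h0 : (0:ℝ) ≤ n := Nat.cast_nonneg n
  have hK : (((n:ℝ)+1)*((n:ℝ)+2*l-1)) ≠ 0 := ne_of_gt (by nlinarith)
  rw [pow_one, pow_one, ← neg_div, add_div' _ _ _ hK]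
  congr 1
  linear_combination (-(2 * gw1 l n x)) * hode

lemma gE_le_zero (l : ℝ) (n : ℕ) (hl : 1 ≤ l) (b : ℝ) (hb0 : 0 ≤ b) (hb1 : b < 1) :
    gE l n b ≤ gE l n 0 := by
  have hmem : ∀ y ∈ Set.Icc (0:ℝ) b, 0 < 1 - y^2 := by
    intro y hy
    have h1 : 0 ≤ y := hy.1
    have h2 : y ≤ b := hy.2
    nlinarith
  have hcont : ContinuousOn (gE l n) (Set.Icc 0 b) := fun y hy =>
    ((gE_hasDerivAt l n y hl (hmem y hy)).continuousAt).continuousWithinAt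
  have hdiff : DifferentiableOn ℝ (gE l n) (interior (Set.Icc 0 b)) := by
    intro y hy
    rw [interior_Icc] at hy
    exact ((gE_hasDerivAt l n y hl (hmem y ⟨hy.1.le, hy.2.le⟩)).differentiableAt).differentiableWithinAt
  have hderiv : ∀ y ∈ interior (Set.Icc 0 b), deriv (gE l n) y ≤ 0 := by
    intro y hy
    rw [interior_Icc] at hy
    rw [(gE_hasDerivAt l n y hl (hmem y ⟨hy.1.le, hy.2.le⟩)).deriv]
    have h0 : (0:ℝ) ≤ n := Nat.cast_nonneg n
    have hK : (0:ℝ) < ((n:ℝ)+1)*((n:ℝ)+2*l-1) := by nlinarith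
    have : 0 ≤ 4*(l-1)*y*gw1 l n y ^ 2 := by
      have := hy.1.le
      have h4 : (0:ℝ) ≤ 4*(l-1) := by linarith
      positivity
    exact neg_nonpos.mpr (div_nonneg this hK.le)
  have := antitoneOn_of_deriv_nonpos (convex_Icc 0 b) hcont hdiff hderiv
  exact this (Set.left_mem_Icc.mpr hb0) ⟨hb0, le_refl b⟩ hb0

lemma gw_sq_le (l : ℝ) (n : ℕ) (hl : 1 ≤ l) (b : ℝ) (hb0 : 0 ≤ b) (hb1 : b < 1) :
    gw l n b ^ 2 ≤ gE l n 0 := by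
  refine le_trans ?_ (gE_le_zero l n hl b hb0 hb1)
  rw [gE]
  have h0 : (0:ℝ) ≤ n := Nat.cast_nonneg n
  have hK : (0:ℝ) < ((n:ℝ)+1)*((n:ℝ)+2*l-1) := by nlinarith
  have h1 : 0 < 1 - b^2 := by nlinarith
  have : 0 ≤ (1-b^2) * gw1 l n b ^ 2 / (((n:ℝ)+1)*((n:ℝ)+2*l-1)) := by positivity
  linarith

lemma geg_zero (l : ℝ) (hl : 0 < l) : ∀ m : ℕ,
    (gegenbauer l (2*m) 0 = (-1)^m * Real.Gamma ((m:ℝ)+l) / (Real.Gamma l * (m.factorial:ℝ))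
    ∧ gegenbauer l (2*m+1) 0 = 0)
    ∧ (gegD l (2*m) 0 = 0
    ∧ gegD l (2*m+1) 0 = (-1)^m * 2 * Real.Gamma ((m:ℝ)+l+1) / (Real.Gamma l * (m.factorial:ℝ))) := by
  have hGl : Real.Gamma l ≠ 0 := (Real.Gamma_pos_of_pos hl).ne'
  intro m
  induction m with
  | zero =>
    refine ⟨⟨?_, ?_⟩, ?_, ?_⟩
    · simp [gegenbauer, hGl]
    · simp [gegenbauer]
    · simp [gegD]
    · have h1 : Real.Gamma (l+1) = l * Real.Gamma l := Real.Gamma_add_one hl.ne'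
      simp [gegD]
      field_simp
      rw [h1]
  | succ m ih =>
    obtain ⟨⟨he, ho⟩, hd, hdo⟩ := ih
    have hfact : ((m.factorial):ℝ) ≠ 0 := Nat.cast_ne_zero.mpr m.factorial_ne_zero
    have hG1 : Real.Gamma ((m:ℝ)+l+1) = ((m:ℝ)+l) * Real.Gamma ((m:ℝ)+l) :=
      Real.Gamma_add_one (by positivity)
    have hG2 : Real.Gamma ((m:ℝ)+l+1+1) = ((m:ℝ)+l+1) * Real.Gamma ((m:ℝ)+l+1) :=
      Real.Gamma_add_one (by positivity)
    have i1 : 2*(m+1) = 2*m+1+1 := by omega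
    have i2 : 2*(m+1)+1 = (2*m+1)+1+1 := by omega
    have hfs : ((m+1).factorial : ℝ) = ((m:ℝ)+1) * (m.factorial:ℝ) := by
      rw [Nat.factorial_succ]; push_cast; ring
    have harg : ((m+1:ℕ):ℝ) + l = (m:ℝ) + l + 1 := by push_cast; ring
    have harg2 : ((m+1:ℕ):ℝ) + l + 1 = (m:ℝ) + l + 1 + 1 := by push_cast; ring
    have he2 : gegenbauer l (2*(m+1)) 0
        = (-1)^(m+1) * Real.Gamma (((m+1:ℕ):ℝ)+l) / (Real.Gamma l * (((m+1).factorial:ℝ))) := by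
      rw [i1, geg_step, ho, harg, hG1, hfs, he]
      push_cast
      field_simp
      ring
    refine ⟨⟨he2, ?_⟩, ?_, ?_⟩
    · rw [i2, geg_step, ho]
      push_cast
      ring
    · rw [i1, gegD_step, ho, hd]
      push_cast
      ring
    · rw [i2, gegD_step, hdo, ← i1, he2, harg2, harg, hG2, hG1, hfs]
      push_cast
      field_simp
      ring

lemma geg_parity (l : ℝ) : ∀ n : ℕ, ∀ x : ℝ,
    gegenbauer l n (-x) = (-1)^n * gegenbauer l n x := by
  have key : ∀ n, (∀ x : ℝ, gegenbauer l n (-x) = (-1)^n * gegenbauer l n x) ∧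
      (∀ x : ℝ, gegenbauer l (n+1) (-x) = (-1)^(n+1) * gegenbauer l (n+1) x) := by
    intro n
    induction n with
    | zero =>
      refine ⟨fun x => by simp [gegenbauer], fun x => by simp [gegenbauer]⟩
    | succ n ih =>
      refine ⟨ih.2, fun x => ?_⟩
      rw [geg_step, geg_step, ih.1 x, ih.2 x]
      push_cast
      field_simp
      ring
  exact fun n => (key n).1

lemma logconvex_sq (a b : ℝ) (ha : 0 < a) (hb : 0 < b) :
    Real.Gamma ((a+b)/2)^2 ≤ Real.Gamma a * Real.Gamma b := by
  have h := Real.convexOn_log_Gamma.2 (Set.mem_Ioi.mpr ha) (Set.mem_Ioi.mpr hb)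
    (by norm_num : (0:ℝ) ≤ 1/2) (by norm_num : (0:ℝ) ≤ 1/2) (by norm_num)
  simp only [Function.comp_apply, smul_eq_mul] at h
  have hmid : 0 < (a+b)/2 := by linarith
  have h1 : (1/2 : ℝ) * a + 1/2 * b = (a+b)/2 := by ring
  rw [h1] at h
  have hΓm := Real.Gamma_pos_of_pos hmid
  have hΓa := Real.Gamma_pos_of_pos ha
  have hΓb := Real.Gamma_pos_of_pos hb
  rw [← Real.log_le_log_iff (by positivity) (by positivity), Real.log_mul hΓa.ne' hΓb.ne',
    Real.log_pow]
  push_cast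
  linarith

lemma phi_ge_one (y : ℝ) (hy : 0 < y) :
    Real.Gamma (y+1/2)^2 ≤ Real.Gamma y * Real.Gamma (y+1) := by
  have := logconvex_sq y (y+1) hy (by linarith)
  rwa [show (y+(y+1))/2 = y+1/2 by ring] at this

lemma phi_upper (y : ℝ) (hy : 0 < y) :
    Real.Gamma (y+1)^2 ≤ Real.Gamma (y+1/2)^2 * (y+1/2) := by
  have h := logconvex_sq (y+1/2) (y+3/2) (by linarith) (by linarith)
  rw [show ((y+1/2)+(y+3/2))/2 = y+1 by ring] at h
  have h32 : Real.Gamma (y+3/2) = (y+1/2) * Real.Gamma (y+1/2) := by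
    rw [show y+3/2 = (y+1/2)+1 by ring]
    exact Real.Gamma_add_one (by positivity)
  rw [h32] at h
  nlinarith [Real.Gamma_pos_of_pos (show (0:ℝ) < y+1/2 by linarith)]

noncomputable def phiG (y : ℝ) : ℝ := Real.Gamma y * Real.Gamma (y+1) / Real.Gamma (y+1/2)^2

lemma phiG_ge_one (y : ℝ) (hy : 0 < y) : 1 ≤ phiG y := by
  have hp : 0 < Real.Gamma (y+1/2)^2 := pow_pos (Real.Gamma_pos_of_pos (by linarith)) 2
  rw [phiG, le_div_iff₀ hp, one_mul]
  exact phi_ge_one y hy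

lemma phiG_upper (y : ℝ) (hy : 0 < y) : phiG y ≤ (y+1/2)/y := by
  have hp : 0 < Real.Gamma (y+1/2)^2 := pow_pos (Real.Gamma_pos_of_pos (by linarith)) 2
  have hg1 : Real.Gamma (y+1) = y * Real.Gamma y := Real.Gamma_add_one hy.ne'
  have hup := phi_upper y hy
  rw [hg1] at hup
  rw [phiG, div_le_div_iff₀ hp hy, hg1]
  nlinarith

lemma phiG_step (y : ℝ) (hy : 0 < y) : phiG y = (y+1/2)^2/(y*(y+1)) * phiG (y+1) := by
  have hg1 : Real.Gamma (y+1) = y * Real.Gamma y := Real.Gamma_add_one hy.ne'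
  have hg2 : Real.Gamma (y+1+1) = (y+1) * Real.Gamma (y+1) := Real.Gamma_add_one (by positivity)
  have hg3 : Real.Gamma (y+1+1/2) = (y+1/2) * Real.Gamma (y+1/2) := by
    rw [show y+1+1/2 = (y+1/2)+1 by ring]
    exact Real.Gamma_add_one (by positivity)
  have hΓh : Real.Gamma (y+1/2) ≠ 0 := (Real.Gamma_pos_of_pos (by linarith)).ne'
  rw [phiG, phiG, hg2, hg3, hg1]
  have h1 : y + 1 ≠ 0 := by positivity
  have h2 : y + 1/2 ≠ 0 := by positivity
  field_simp

noncomputable def pG (y : ℝ) (N : ℕ) : ℝ :=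
  ∏ k ∈ Finset.range N, ((y+k+1/2)^2/((y+k)*(y+k+1)))

lemma pG_nonneg (y : ℝ) (hy : 0 < y) (N : ℕ) : 0 ≤ pG y N := by
  apply Finset.prod_nonneg
  intro k _
  have h1 : (0:ℝ) < y + k := by positivity
  have h2 : (0:ℝ) < y + k + 1 := by positivity
  positivity

lemma pG_tele (y : ℝ) (hy : 0 < y) : ∀ N : ℕ, phiG y = pG y N * phiG (y + N) := by
  intro N
  induction N with
  | zero => simp [pG]
  | succ N ih =>
    rw [ih, show pG y (N+1) = pG y N * ((y+(N:ℝ)+1/2)^2/((y+(N:ℝ))*(y+(N:ℝ)+1))) from by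
      rw [pG, pG, Finset.prod_range_succ]]
    have hyN : 0 < y + (N:ℝ) := by positivity
    rw [phiG_step (y + (N:ℝ)) hyN]
    rw [show y + ((N:ℕ)+1:ℕ) = y + (N:ℝ) + 1 by push_cast; ring]
    ring

lemma pG_mono (t a : ℝ) (ht : 0 < t) (hta : t ≤ a) (N : ℕ) : pG a N ≤ pG t N := by
  have ha : (0:ℝ) < a := lt_of_lt_of_le ht hta
  apply Finset.prod_le_prod
  · intro k _
    have h1 : (0:ℝ) < a + k := by positivity
    have h2 : (0:ℝ) < a + k + 1 := by positivity
    positivity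
  · intro k _
    have h1 : (0:ℝ) < a + k := by positivity
    have h2 : (0:ℝ) < t + k := by positivity
    rw [div_le_div_iff₀ (by positivity) (by positivity)]
    nlinarith [sq_nonneg ((a:ℝ)+k), sq_nonneg ((t:ℝ)+k)]

lemma phiG_antitone (t a : ℝ) (ht : 1 ≤ t) (hta : t ≤ a) : phiG a ≤ phiG t := by
  have ht0 : 0 < t := by linarith
  have ha0 : 0 < a := by linarith
  have key : ∀ N : ℕ, phiG a ≤ phiG t * ((a+N+1/2)/(a+N)) := by
    intro N
    have haN : (0:ℝ) < a + N := by positivity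
    have h1 : phiG a = pG a N * phiG (a + N) := pG_tele a ha0 N
    have h2 : phiG (a+N) ≤ (a+N+1/2)/(a+N) := by
      have := phiG_upper (a+(N:ℝ)) haN
      convert this using 2 <;> ring
    have h3 : pG a N ≤ pG t N := pG_mono t a ht0 hta N
    have h4 : pG t N ≤ phiG t := by
      have h5 := pG_tele t ht0 N
      have h6 : (1:ℝ) ≤ phiG (t + N) := phiG_ge_one _ (by positivity)
      nlinarith [pG_nonneg t ht0 N]
    have h7 : 0 ≤ phiG (a+N) := le_trans zero_le_one (phiG_ge_one _ (by positivity))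
    have h8 : (0:ℝ) ≤ (a+N+1/2)/(a+N) := by positivity
    calc phiG a = pG a N * phiG (a+N) := h1
      _ ≤ pG t N * ((a+N+1/2)/(a+N)) := mul_le_mul h3 h2 h7 (pG_nonneg t ht0 N)
      _ ≤ phiG t * ((a+N+1/2)/(a+N)) := mul_le_mul_of_nonneg_right h4 h8
  have hlim : Filter.Tendsto (fun N : ℕ => phiG t * ((a+N+1/2)/(a+N)))
      Filter.atTop (nhds (phiG t)) := by
    have hAtTop : Filter.Tendsto (fun N : ℕ => a + (N:ℝ)) Filter.atTop Filter.atTop :=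
      Filter.tendsto_atTop_add_const_left _ a tendsto_natCast_atTop_atTop
    have hinv : Filter.Tendsto (fun N : ℕ => (a + (N:ℝ))⁻¹) Filter.atTop (nhds 0) :=
      hAtTop.inv_tendsto_atTop
    have : Filter.Tendsto (fun N : ℕ => phiG t * (1 + (1/2) * (a + (N:ℝ))⁻¹))
        Filter.atTop (nhds (phiG t * (1 + (1/2) * 0))) :=
      (((hinv.const_mul (1/2)).const_add 1).const_mul (phiG t))
    simp only [mul_zero, add_zero, mul_one] at this
    refine this.congr fun N => ?_
    have haN : (0:ℝ) < a + N := by positivity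
    congr 1
    rw [inv_eq_one_div]
    field_simp
  exact ge_of_tendsto' hlim key

lemma gw_zero (l : ℝ) (n : ℕ) : gw l n 0 = gegenbauer l n 0 := by
  rw [gw]; norm_num

lemma gw1_zero (l : ℝ) (n : ℕ) : gw1 l n 0 = gegD l n 0 := by
  rw [gw1]; norm_num

lemma gE_zero_le (l : ℝ) (hl : 1 ≤ l) (n : ℕ) :
    gE l n 0 ≤ (Real.Gamma ((n:ℝ)/2 + l) / (Real.Gamma l * Real.Gamma ((n:ℝ)/2 + 1)))^2 := by
  have hl0 : (0:ℝ) < l := by linarith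
  have hGl : (0:ℝ) < Real.Gamma l := Real.Gamma_pos_of_pos hl0
  rcases Nat.even_or_odd n with he | ho
  · -- even case
    obtain ⟨m, hm⟩ := he
    have hn : n = 2*m := by omega
    subst hn
    obtain ⟨⟨hge, -⟩, hgd, -⟩ := geg_zero l hl0 m
    have hfm : (0:ℝ) < (m.factorial : ℝ) := by exact_mod_cast m.factorial_pos
    have hcast : ((2*m : ℕ):ℝ)/2 = (m:ℝ) := by push_cast; ring
    have hsq : ((-1:ℝ)^m)^2 = 1 := by
      rw [← pow_mul, mul_comm, pow_mul]; norm_num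
    rw [gE, gw_zero, gw1_zero, hge, hgd, hcast, Real.Gamma_nat_eq_factorial]
    norm_num
    rw [div_pow, mul_pow, hsq, one_mul, div_pow]
  · -- odd case
    obtain ⟨m, hm⟩ := ho
    subst hm
    obtain ⟨⟨-, hgo⟩, -, hgd⟩ := geg_zero l hl0 m
    have hfm : (0:ℝ) < (m.factorial : ℝ) := by exact_mod_cast m.factorial_pos
    have hm0 : (0:ℝ) ≤ (m:ℝ) := Nat.cast_nonneg m
    -- Gamma abbreviations
    set A := Real.Gamma ((m:ℝ)+l) with hA
    set A1 := Real.Gamma ((m:ℝ)+l+1) with hA1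
    set Ah := Real.Gamma ((m:ℝ)+l+1/2) with hAh
    set T := Real.Gamma ((m:ℝ)+1) with hT
    set T1 := Real.Gamma ((m:ℝ)+1+1) with hT1
    set Th := Real.Gamma ((m:ℝ)+1+1/2) with hTh
    have hApos : 0 < A := Real.Gamma_pos_of_pos (by positivity)
    have hA1pos : 0 < A1 := Real.Gamma_pos_of_pos (by positivity)
    have hAhpos : 0 < Ah := Real.Gamma_pos_of_pos (by positivity)
    have hTpos : 0 < T := Real.Gamma_pos_of_pos (by positivity)
    have hT1pos : 0 < T1 := Real.Gamma_pos_of_pos (by positivity)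
    have hThpos : 0 < Th := Real.Gamma_pos_of_pos (by positivity)
    have hG1 : A1 = ((m:ℝ)+l) * A := Real.Gamma_add_one (by positivity)
    have hGT : T1 = ((m:ℝ)+1) * T := Real.Gamma_add_one (by positivity)
    have hTfac : T = (m.factorial : ℝ) := Real.Gamma_nat_eq_factorial m
    -- key Gamma inequality
    have key : A * A1 * Th^2 ≤ T * T1 * Ah^2 := by
      have h := phiG_antitone ((m:ℝ)+1) ((m:ℝ)+l) (by linarith) (by linarith)
      rw [phiG, phiG] at h
      rw [div_le_div_iff₀ (by positivity) (by positivity)] at h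
      calc A * A1 * Th^2 = Real.Gamma ((m:ℝ)+l) * Real.Gamma ((m:ℝ)+l+1)
            * Real.Gamma ((m:ℝ)+1+1/2)^2 := rfl
        _ ≤ Real.Gamma ((m:ℝ)+1) * Real.Gamma ((m:ℝ)+1+1) * Real.Gamma ((m:ℝ)+l+1/2)^2 := h
        _ = T * T1 * Ah^2 := rfl
    have hmain : 4 * A1^2 * Th^2
        ≤ Ah^2 * ((((2*m+1:ℕ):ℝ)+1)*(((2*m+1:ℕ):ℝ)+2*l-1)) * T^2 := by
      calc 4 * A1^2 * Th^2 = 4*((m:ℝ)+l) * (A * A1 * Th^2) := by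
            linear_combination (4*A1*Th^2) * hG1
        _ ≤ 4*((m:ℝ)+l) * (T * T1 * Ah^2) := by
            apply mul_le_mul_of_nonneg_left key (by linarith)
        _ = Ah^2 * ((((2*m+1:ℕ):ℝ)+1)*(((2*m+1:ℕ):ℝ)+2*l-1)) * T^2 := by
            push_cast
            linear_combination (4*((m:ℝ)+l)*T*Ah^2) * hGT
    have hsq : ((-1:ℝ)^m)^2 = 1 := by
      rw [← pow_mul, mul_comm, pow_mul]; norm_num
    have hcast1 : ((2*m+1 : ℕ):ℝ)/2 + l = (m:ℝ)+l+1/2 := by push_cast; ring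
    have hcast2 : ((2*m+1 : ℕ):ℝ)/2 + 1 = (m:ℝ)+1+1/2 := by push_cast; ring
    have hK : (0:ℝ) < (((2*m+1:ℕ):ℝ)+1)*(((2*m+1:ℕ):ℝ)+2*l-1) := by
      push_cast; nlinarith
    rw [gE, gw_zero, gw1_zero, hgo, hgd, hcast1, hcast2, ← hAh, ← hTh]
    norm_num
    rw [hTfac] at hmain
    push_cast at hmain hK ⊢
    have hb : (0:ℝ) < (Real.Gamma l * (m.factorial:ℝ))^2
        * ((2*(m:ℝ)+1+1)*(2*(m:ℝ)+1+2*l-1)) :=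
      mul_pos (pow_pos (mul_pos hGl hfm) 2) hK
    have hd : (0:ℝ) < (Real.Gamma l * Th)^2 := pow_pos (mul_pos hGl hThpos) 2
    rw [div_pow, div_pow, div_div, div_le_div_iff₀ hb hd]
    calc ((-1:ℝ)^m*2*A1)^2 * (Real.Gamma l*Th)^2 = (4*A1^2*Th^2) * (Real.Gamma l)^2 := by
          linear_combination (4*A1^2*(Real.Gamma l)^2*Th^2) * hsq
      _ ≤ (Ah^2 * ((2*(m:ℝ)+1+1)*(2*(m:ℝ)+1+2*l-1)) * ((m.factorial:ℝ))^2)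
            * (Real.Gamma l)^2 := mul_le_mul_of_nonneg_right hmain (sq_nonneg _)
      _ = Ah^2 * ((Real.Gamma l * (m.factorial:ℝ))^2
            * ((2*(m:ℝ)+1+1)*(2*(m:ℝ)+1+2*l-1))) := by ring

theorem durand_inequality (n : ℕ) (hn : 1 ≤ n) (lam : ℝ) (hlam : 1 ≤ lam)
    (x : ℝ) (hx : x ∈ Set.Icc (-1 : ℝ) 1) :
    (1 - x ^ 2) ^ (lam - 1 / 2) * |gegenbauer lam n x|
      ≤ Real.Gamma ((n : ℝ) / 2 + lam) / (Real.Gamma lam * Real.Gamma ((n : ℝ) / 2 + 1)) := by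
  obtain ⟨hxa, hxb⟩ := hx
  set M := Real.Gamma ((n:ℝ)/2 + lam) / (Real.Gamma lam * Real.Gamma ((n:ℝ)/2 + 1)) with hM
  have hl0 : (0:ℝ) < lam := by linarith
  have hMpos : 0 < M :=
    div_pos (Real.Gamma_pos_of_pos (by positivity))
      (mul_pos (Real.Gamma_pos_of_pos hl0) (Real.Gamma_pos_of_pos (by positivity)))
  by_cases hxe : x^2 = 1
  · rw [show (1 - x^2 : ℝ) = 0 from by rw [hxe]; ring,
      Real.zero_rpow (by intro h; nlinarith : lam - 1/2 ≠ 0), zero_mul]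
    exact hMpos.le
  · have hxlt : x^2 < 1 := lt_of_le_of_ne (by nlinarith) hxe
    have main : ∀ y : ℝ, 0 ≤ y → y < 1 →
        (1 - y^2)^(lam - 1/2) * |gegenbauer lam n y| ≤ M := by
      intro y hy0 hy1
      have h1 : gw lam n y ^2 ≤ M^2 :=
        le_trans (gw_sq_le lam n hlam y hy0 hy1) (gE_zero_le lam hlam n)
      have habs : (1-y^2)^(lam-1/2) * |gegenbauer lam n y| = |gw lam n y| := by
        rw [gw, abs_mul, abs_of_nonneg (Real.rpow_nonneg (by nlinarith) _)]
      rw [habs]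
      nlinarith [sq_abs (gw lam n y), abs_nonneg (gw lam n y)]
    rcases le_or_gt 0 x with hx0 | hx0
    · exact main x hx0 (by nlinarith)
    · have hpar := geg_parity lam n x
      have habs2 : |gegenbauer lam n x| = |gegenbauer lam n (-x)| := by
        rw [hpar, abs_mul, abs_pow, abs_neg, abs_one, one_pow, one_mul]
      rw [show (1 - x^2 : ℝ) = 1 - (-x)^2 from by ring, habs2]
      exact main (-x) (by linarith) (by nlinarith)
end
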